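/- arXiv:2102.04115 — 2 statements merged into one kernel-verified Lean document; each statement's English description precedes it below -/
import Mathlib

section
/- For complex a with a ∉ {0,-1,-2,...}, Γ(a+z)Γ(a-z)/Γ(a)^2 = ∏_{k=0}^∞ (1 - (z/(a+k))^2)^{-1} for all z with z ≠ ±(a+k) for all k. -/
open Complex Filter Finset Asymptotics Topology

theorem stmt_8 (a : ℂ) (ha : ∀ n : ℕ, a ≠ -(n : ℂ))
    (z : ℂ) (hz : ∀ k : ℕ, z ≠ a + k ∧ z ≠ -(a + k)) :
    Complex.Gamma (a + z) * Complex.Gamma (a - z) / Complex.Gamma a ^ 2 =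
      ∏' k : ℕ, (1 - (z / (a + k)) ^ 2)⁻¹ := by
  have haa : ∀ k : ℕ, a + (k : ℂ) ≠ 0 := by
    intro k h
    exact ha k (eq_neg_of_add_eq_zero_left h)
  have hplus : ∀ k : ℕ, a + (k : ℂ) + z ≠ 0 := by
    intro k h
    exact (hz k).2 (by linear_combination h)
  have hminus : ∀ k : ℕ, a + (k : ℂ) - z ≠ 0 := by
    intro k h
    exact (hz k).1 (by linear_combination -h)
  have hden : ∀ k : ℕ, (a + (k : ℂ)) ^ 2 - z ^ 2 ≠ 0 := by
    intro k
    have : (a + (k : ℂ)) ^ 2 - z ^ 2 = (a + k + z) * (a + k - z) := by ring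
    rw [this]
    exact mul_ne_zero (hplus k) (hminus k)
  set f : ℕ → ℂ := fun k => (1 - (z / (a + k)) ^ 2)⁻¹ with hfdef
  have hfk : ∀ k : ℕ, f k = (a + (k : ℂ)) ^ 2 / ((a + (k : ℂ)) ^ 2 - z ^ 2) := by
    intro k
    have h1 : 1 - (z / (a + (k : ℂ))) ^ 2 = ((a + (k : ℂ)) ^ 2 - z ^ 2) / (a + (k : ℂ)) ^ 2 := by
      rw [div_pow, sub_div, div_self (pow_ne_zero 2 (haa k))]
    rw [hfdef]
    simp only [h1, inv_div]
  have hf0 : ∀ k, f k ≠ 0 := by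
    intro k
    rw [hfk k]
    exact div_ne_zero (pow_ne_zero 2 (haa k)) (hden k)
  have hsub : ∀ k : ℕ, f k - 1 = z ^ 2 / ((a + (k : ℂ)) ^ 2 - z ^ 2) := by
    intro k
    rw [hfk k, div_sub_one (hden k)]
    ring_nf
  -- tendsto of k²/((a+k)²-z²) to 1
  have hinv : Tendsto (fun k : ℕ => ((k : ℂ))⁻¹) atTop (𝓝 0) := by
    rw [tendsto_zero_iff_norm_tendsto_zero]
    simp only [norm_inv, Complex.norm_natCast]
    exact tendsto_one_div_atTop_nhds_zero_nat.congr (by simp [one_div])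
  have hs : Tendsto (fun k : ℕ => ((a + (k : ℂ)) ^ 2 - z ^ 2) / (k : ℂ) ^ 2) atTop (𝓝 1) := by
    have h1 : Tendsto (fun k : ℕ => (a * ((k : ℂ))⁻¹ + 1) ^ 2 - (z * ((k : ℂ))⁻¹) ^ 2)
        atTop (𝓝 ((a * 0 + 1) ^ 2 - (z * 0) ^ 2)) := by
      exact (((tendsto_const_nhds.mul hinv).add tendsto_const_nhds).pow 2).sub
        ((tendsto_const_nhds.mul hinv).pow 2)
    simp only [mul_zero, zero_add, one_pow, ne_eq, OfNat.ofNat_ne_zero, not_false_eq_true,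
      zero_pow, sub_zero] at h1
    apply h1.congr'
    filter_upwards [eventually_ge_atTop 1] with k hk
    have hk0 : (k : ℂ) ≠ 0 := Nat.cast_ne_zero.mpr (by omega)
    field_simp
  have ht : Tendsto (fun k : ℕ => (k : ℂ) ^ 2 / ((a + (k : ℂ)) ^ 2 - z ^ 2)) atTop (𝓝 1) := by
    have := (hs.inv₀ one_ne_zero)
    simp only [inv_one] at this
    exact this.congr (fun k => by rw [inv_div])
  -- Summability of f k - 1
  have hbig : (fun k : ℕ => f k - 1) =O[atTop] fun k : ℕ => (((k : ℝ)) ^ 2)⁻¹ := by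
    have h1 : (fun k : ℕ => z ^ 2 * ((k : ℂ) ^ 2 / ((a + (k : ℂ)) ^ 2 - z ^ 2)))
        =O[atTop] (fun _ : ℕ => (1 : ℝ)) :=
      (tendsto_const_nhds.mul ht).isBigO_one ℝ
    have h2 : (fun k : ℕ => ((k : ℂ) ^ 2)⁻¹) =O[atTop] fun k : ℕ => (((k : ℝ)) ^ 2)⁻¹ := by
      apply isBigO_of_le
      intro k
      simp [norm_inv, norm_pow]
    have h3 := h1.mul h2
    apply h3.congr'
    · filter_upwards [eventually_ge_atTop 1] with k hk
      have hk0 : (k : ℂ) ≠ 0 := Nat.cast_ne_zero.mpr (by omega)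
      rw [hsub k]
      field_simp
    · filter_upwards with k
      simp
  have hsum : Summable fun k : ℕ => f k - 1 := by
    refine summable_of_isBigO_nat ?_ hbig
    have := Real.summable_one_div_nat_pow.mpr (by norm_num : 1 < 2)
    exact this.congr (fun n => by simp [one_div])
  -- Summability of log (f k)
  have hlog : Summable fun k : ℕ => Complex.log (f k) := by
    apply Summable.of_norm_bounded_eventually_nat (g := fun k => 3 / 2 * ‖f k - 1‖)
      (hsum.norm.mul_left _)
    have h0 : Tendsto (fun k : ℕ => f k - 1) atTop (𝓝 0) := hsum.tendsto_atTop_zero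
    have hh : ∀ᶠ k : ℕ in atTop, ‖f k - 1‖ ≤ 1 / 2 := by
      exact (tendsto_zero_iff_norm_tendsto_zero.mp h0).eventually_le_const
        (by norm_num : (0:ℝ) < 1/2)
    filter_upwards [hh] with k hk
    have h2 := Complex.norm_log_one_add_half_le_self hk
    simpa using h2
  have hmult : Multipliable f :=
    Complex.multipliable_of_summable_log hlog
  have hprod : Tendsto (fun n : ℕ => ∏ i ∈ Finset.range n, f i) atTop (𝓝 (∏' k, f k)) :=
    hmult.hasProd.tendsto_prod_nat
  -- Partial products equal GammaSeq ratio
  have key : ∀ n : ℕ, n ≠ 0 → ∏ i ∈ Finset.range (n + 1), f i =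
      GammaSeq (a + z) n * GammaSeq (a - z) n / GammaSeq a n ^ 2 := by
    intro n hn
    have hn0 : (n : ℂ) ≠ 0 := Nat.cast_ne_zero.mpr hn
    have hA : ∏ j ∈ Finset.range (n + 1), (a + z + (j : ℂ)) ≠ 0 :=
      Finset.prod_ne_zero_iff.mpr fun j _ => by
        have := hplus j; intro h; exact this (by linear_combination h)
    have hB : ∏ j ∈ Finset.range (n + 1), (a - z + (j : ℂ)) ≠ 0 :=
      Finset.prod_ne_zero_iff.mpr fun j _ => by
        have := hminus j; intro h; exact this (by linear_combination h)
    have hC : ∏ j ∈ Finset.range (n + 1), (a + (j : ℂ)) ≠ 0 :=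
      Finset.prod_ne_zero_iff.mpr fun j _ => haa j
    have hfact : ((n.factorial : ℂ)) ≠ 0 := Nat.cast_ne_zero.mpr n.factorial_ne_zero
    have hcpow : ∀ w : ℂ, (n : ℂ) ^ w ≠ 0 := fun w => by
      simp [cpow_def_of_ne_zero hn0, Complex.exp_ne_zero]
    have hpowmul : (n : ℂ) ^ (a + z) * (n : ℂ) ^ (a - z) = ((n : ℂ) ^ a) ^ 2 := by
      rw [← cpow_add _ _ hn0]
      have : a + z + (a - z) = a + a := by ring
      rw [this, cpow_add _ _ hn0, sq]
    have hL : ∏ i ∈ Finset.range (n + 1), f i =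
        (∏ j ∈ Finset.range (n + 1), (a + (j : ℂ))) ^ 2 /
          ((∏ j ∈ Finset.range (n + 1), (a + z + (j : ℂ))) *
            (∏ j ∈ Finset.range (n + 1), (a - z + (j : ℂ)))) := by
      rw [← Finset.prod_pow, ← Finset.prod_mul_distrib, ← Finset.prod_div_distrib]
      refine Finset.prod_congr rfl fun j _ => ?_
      rw [hfk j]
      congr 1
      ring
    rw [hL, GammaSeq, GammaSeq, GammaSeq]
    field_simp
    rw [hpowmul, div_self (pow_ne_zero 2 (hcpow a))]
  -- Limits
  have hG : Tendsto (fun n : ℕ => GammaSeq (a + z) n * GammaSeq (a - z) n / GammaSeq a n ^ 2)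
      atTop (𝓝 (Gamma (a + z) * Gamma (a - z) / Gamma a ^ 2)) := by
    refine Tendsto.div ((GammaSeq_tendsto_Gamma (a + z)).mul (GammaSeq_tendsto_Gamma (a - z)))
      ((GammaSeq_tendsto_Gamma a).pow 2) (pow_ne_zero 2 (Complex.Gamma_ne_zero ha))
  have hleft : Tendsto (fun n : ℕ => GammaSeq (a + z) n * GammaSeq (a - z) n / GammaSeq a n ^ 2)
      atTop (𝓝 (∏' k, f k)) := by
    have h1 : Tendsto (fun n : ℕ => ∏ i ∈ Finset.range (n + 1), f i) atTop (𝓝 (∏' k, f k)) :=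
      hprod.comp (tendsto_add_atTop_nat 1)
    apply h1.congr'
    filter_upwards [eventually_ge_atTop 1] with n hn
    exact key n (by omega)
  exact (tendsto_nhds_unique hleft hG).symm
end

section
/- ∑_{k=0}^∞ (-1)^{k(k+1)/2} / (2k+1)^2 = √2 π² / 16. -/
open Real

private lemma bern2_eval (x : ℝ) :
    (Polynomial.map (algebraMap ℚ ℝ) (Polynomial.bernoulli 2)).eval x
      = x ^ 2 - x + 1 / 6 := by
  simp [Polynomial.bernoulli_def, Finset.sum_range_succ, _root_.bernoulli_zero,
    _root_.bernoulli_one, _root_.bernoulli_eq_bernoulli'_of_ne_one, _root_.bernoulli'_two]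
  ring

private lemma cosSum {x : ℝ} (hx : x ∈ Set.Icc (0:ℝ) 1) :
    HasSum (fun n : ℕ => 1 / (n : ℝ) ^ 2 * Real.cos (2 * π * n * x))
      (π ^ 2 * (x ^ 2 - x + 1 / 6)) := by
  have h := hasSum_one_div_nat_pow_mul_cos (k := 1) one_ne_zero hx
  rw [bern2_eval] at h
  have hc : ((-1:ℝ)) ^ (1 + 1) * (2 * π) ^ (2 * 1) / 2 / ((Nat.factorial (2*1)) : ℝ)
      = π ^ 2 := by
    norm_num [Nat.factorial, mul_pow]
    ring
  rw [hc] at h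
  exact h

private lemma neg_one_pow_period (m : ℕ) :
    ((-1 : ℝ)) ^ ((m + 4) * (m + 4 + 1) / 2) = (-1 : ℝ) ^ (m * (m + 1) / 2) := by
  have he : Even (m * (m + 1)) := Nat.even_mul_succ_self m
  obtain ⟨c, hc⟩ := he
  have h2 : (m + 4) * (m + 4 + 1) = m * (m + 1) + (8 * m + 20) := by ring
  have h3 : (m + 4) * (m + 4 + 1) / 2 = m * (m + 1) / 2 + (4 * m + 10) := by omega
  have h4 : Even (4 * m + 10) := ⟨2 * m + 5, by ring⟩
  rw [h3, pow_add, h4.neg_one_pow, mul_one]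

private lemma keycos (k : ℕ) :
    Real.cos (2 * π * (2 * (k : ℝ) + 1) * (1 / 8))
      = (-1 : ℝ) ^ (k * (k + 1) / 2) * (Real.sqrt 2 / 2) := by
  induction k using Nat.strong_induction_on with
  | _ k ih =>
    rcases lt_or_ge k 4 with hk | hk
    · interval_cases k
      · have : 2 * π * (2 * ((0:ℕ) : ℝ) + 1) * (1 / 8) = π / 4 := by push_cast; ring
        rw [this, Real.cos_pi_div_four]; norm_num
      · have : 2 * π * (2 * ((1:ℕ) : ℝ) + 1) * (1 / 8) = π - π / 4 := by push_cast; ring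
        rw [this, Real.cos_pi_sub, Real.cos_pi_div_four]; norm_num
      · have : 2 * π * (2 * ((2:ℕ) : ℝ) + 1) * (1 / 8) = π + π / 4 := by push_cast; ring
        rw [this, Real.cos_add, Real.cos_pi, Real.sin_pi, Real.cos_pi_div_four]; norm_num
      · have : 2 * π * (2 * ((3:ℕ) : ℝ) + 1) * (1 / 8) = 2 * π - π / 4 := by push_cast; ring
        rw [this, Real.cos_sub, Real.cos_two_pi, Real.sin_two_pi, Real.cos_pi_div_four]
        norm_num
    · obtain ⟨m, rfl⟩ : ∃ m, k = m + 4 := ⟨k - 4, by omega⟩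
      have harg : 2 * π * (2 * ((m + 4 : ℕ) : ℝ) + 1) * (1 / 8)
          = 2 * π * (2 * (m : ℝ) + 1) * (1 / 8) + 2 * π := by push_cast; ring
      rw [harg, Real.cos_add_two_pi, ih m (by omega), neg_one_pow_period]

theorem stmt_16 :
    ∑' k : ℕ, (-1 : ℝ) ^ (k * (k + 1) / 2) / (2 * (k : ℝ) + 1) ^ 2 =
      Real.sqrt 2 * Real.pi ^ 2 / 16 := by
  set f : ℕ → ℝ := fun n => 1 / (n : ℝ) ^ 2 * Real.cos (2 * π * n * (1 / 8)) with hf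
  have h18 : HasSum f (π ^ 2 * (11 / 192)) := by
    have := cosSum (x := 1/8) (by norm_num)
    convert this using 2
    norm_num
  have h14 : HasSum (fun n : ℕ => 1 / (n : ℝ) ^ 2 * Real.cos (2 * π * n * (1 / 4)))
      (π ^ 2 * (-1 / 48)) := by
    have := cosSum (x := 1/4) (by norm_num)
    convert this using 2
    norm_num
  have heven : HasSum (fun m : ℕ => f (2 * m)) (π ^ 2 * (-1 / 48) / 4) := by
    have h := h14.div_const 4
    convert h using 1
    · rfl
    funext m
    have harg : 2 * π * ((2 * m : ℕ) : ℝ) * (1 / 8) = 2 * π * (m : ℝ) * (1 / 4) := by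
      push_cast; ring
    have hc : (1 : ℝ) / ((2 * m : ℕ) : ℝ) ^ 2 = (1 / (m : ℝ) ^ 2) / 4 := by
      push_cast
      rw [mul_pow]
      rw [div_div]
      norm_num
      ring_nf
    simp only [hf, harg, hc]
    ring
  have hsummOdd : Summable (fun k : ℕ => f (2 * k + 1)) :=
    h18.summable.comp_injective (fun a b hab => by omega)
  have hodd : HasSum (fun k : ℕ => f (2 * k + 1)) (π ^ 2 / 16) := by
    have h := hsummOdd.hasSum
    have htot := heven.even_add_odd h
    have huniq := htot.unique h18
    have hval : ∑' k : ℕ, f (2 * k + 1) = π ^ 2 / 16 := by linarith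
    rwa [hval] at h
  have hfinal : HasSum (fun k : ℕ => (-1 : ℝ) ^ (k * (k + 1) / 2) / (2 * (k : ℝ) + 1) ^ 2)
      (Real.sqrt 2 * (π ^ 2 / 16)) := by
    have h := hodd.mul_left (Real.sqrt 2)
    convert h using 1
    · rfl
    funext k
    have harg : f (2 * k + 1)
        = 1 / (2 * (k : ℝ) + 1) ^ 2 * ((-1 : ℝ) ^ (k * (k + 1) / 2) * (Real.sqrt 2 / 2)) := by
      show 1 / ((2 * k + 1 : ℕ) : ℝ) ^ 2 * Real.cos (2 * π * ((2 * k + 1 : ℕ) : ℝ) * (1 / 8)) = _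
      push_cast
      rw [← keycos k]
    rw [harg]
    have h2 : Real.sqrt 2 * Real.sqrt 2 = 2 := Real.mul_self_sqrt (by norm_num)
    have h3 : Real.sqrt 2 * (1 / (2 * (k : ℝ) + 1) ^ 2
          * ((-1 : ℝ) ^ (k * (k + 1) / 2) * (Real.sqrt 2 / 2)))
        = (Real.sqrt 2 * Real.sqrt 2) * ((-1 : ℝ) ^ (k * (k + 1) / 2)
          / (2 * (k : ℝ) + 1) ^ 2) / 2 := by ring
    rw [h3, h2]
    ring
  rw [hfinal.tsum_eq]
  ring
end
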